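/- All but finitely many link-irregular graphs are non-planar; i.e., there are only finitely many isomorphism classes of planar link-irregular graphs. -/

import Mathlib

open SimpleGraph Finset

/-- The link of a vertex `v`: the subgraph induced by the neighborhood of `v`. -/
def SimpleGraph.link {V : Type*} (G : SimpleGraph V) (v : V) :
    SimpleGraph (G.neighborSet v) :=
  G.induce (G.neighborSet v)

/-- A graph is link-irregular if the links of any two distinct vertices are
non-isomorphic. -/
def SimpleGraph.LinkIrregular {V : Type*} (G : SimpleGraph V) : Prop :=
  ∀ u v : V, u ≠ v → ¬ Nonempty (G.link u ≃g G.link v)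

/-- `H` is a minor of `G`: there are disjoint nonempty connected branch sets in `G`,
one for each vertex of `H`, with an edge of `G` between the branch sets of any two
adjacent vertices of `H`. -/
def SimpleGraph.HasMinor {V W : Type*} (G : SimpleGraph V) (H : SimpleGraph W) : Prop :=
  ∃ f : W → Set V,
    (∀ w, (f w).Nonempty) ∧
    (∀ w, (G.induce (f w)).Connected) ∧
    (Pairwise fun w₁ w₂ => Disjoint (f w₁) (f w₂)) ∧
    (∀ w₁ w₂, H.Adj w₁ w₂ → ∃ a ∈ f w₁, ∃ b ∈ f w₂, G.Adj a b)

/-- Planarity, via Wagner's characterization: a graph is planar iff it has neither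
a `K₅` minor nor a `K₃,₃` minor. -/
def SimpleGraph.Planar {V : Type*} (G : SimpleGraph V) : Prop :=
  ¬ G.HasMinor (completeGraph (Fin 5)) ∧
  ¬ G.HasMinor (completeBipartiteGraph (Fin 3) (Fin 3))


open scoped Classical

variable {V : Type*}

open scoped Classical

variable {V : Type*}

/-- Connectivity of a vertex set inside an ambient graph, phrased with
`Relation.ReflTransGen` for easy induction. -/
def ConnOn (G : SimpleGraph V) (s : Set V) : Prop :=
  s.Nonempty ∧ ∀ ⦃a⦄, a ∈ s → ∀ ⦃b⦄, b ∈ s →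
    Relation.ReflTransGen (fun p q => p ∈ s ∧ q ∈ s ∧ G.Adj p q) a b

lemma rtg_to_reachable (G : SimpleGraph V) (s : Set V) {a b : V} (hb : b ∈ s)
    (h : Relation.ReflTransGen (fun p q => p ∈ s ∧ q ∈ s ∧ G.Adj p q) a b) :
    ∀ ha : a ∈ s, (G.induce s).Reachable ⟨a, ha⟩ ⟨b, hb⟩ := by
  induction h using Relation.ReflTransGen.head_induction_on with
  | refl => intro ha; rfl
  | head h' _ ih =>
      intro ha
      obtain ⟨hp, hq, hadj⟩ := h'
      exact (SimpleGraph.Adj.reachable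
        (show (G.induce s).Adj ⟨_, hp⟩ ⟨_, hq⟩ from hadj)).trans (ih hq)

lemma walk_to_rtg {G : SimpleGraph V} {s : Set V} {u v : ↥s}
    (w : (G.induce s).Walk u v) :
    Relation.ReflTransGen (fun p q => p ∈ s ∧ q ∈ s ∧ G.Adj p q) u.1 v.1 := by
  induction w with
  | nil => exact .refl
  | @cons a c _ h _ ih => exact .head ⟨a.2, c.2, h⟩ ih

lemma connOn_iff_induce_connected (G : SimpleGraph V) (s : Set V) :
    ConnOn G s ↔ (G.induce s).Connected := by
  constructor
  · rintro ⟨⟨a0, ha0⟩, h⟩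
    rw [connected_iff]
    refine ⟨?_, ⟨⟨a0, ha0⟩⟩⟩
    rintro ⟨a, ha⟩ ⟨b, hb⟩
    exact rtg_to_reachable G s hb (h ha hb) ha
  · intro h
    have hne : s.Nonempty := by
      obtain ⟨⟨a, ha⟩⟩ := h.nonempty
      exact ⟨a, ha⟩
    refine ⟨hne, ?_⟩
    intro a ha b hb
    obtain ⟨w⟩ := h.preconnected ⟨a, ha⟩ ⟨b, hb⟩
    exact walk_to_rtg w

lemma connOn_singleton (G : SimpleGraph V) (a : V) : ConnOn G {a} := by
  refine ⟨⟨a, rfl⟩, ?_⟩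
  rintro p rfl q rfl
  exact .refl

lemma connOn_image (G : SimpleGraph V) (s : Set V) (t : Set ↥s)
    (h : ConnOn (G.induce s) t) : ConnOn G (Subtype.val '' t) := by
  obtain ⟨⟨a, ha⟩, h⟩ := h
  refine ⟨⟨a.1, ⟨a, ha, rfl⟩⟩, ?_⟩
  rintro _ ⟨p, hp, rfl⟩ _ ⟨q, hq, rfl⟩
  exact Relation.ReflTransGen.lift
    (p := fun p q => p ∈ Subtype.val '' t ∧ q ∈ Subtype.val '' t ∧ G.Adj p q) Subtype.val
    (fun a b hab => ⟨⟨a, hab.1, rfl⟩, ⟨b, hab.2.1, rfl⟩, hab.2.2⟩) _ _ (h hp hq)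

lemma hasMinor_of_connOn {W : Type*} (G : SimpleGraph V) (H : SimpleGraph W)
    (f : W → Set V) (h1 : ∀ w, ConnOn G (f w))
    (h2 : Pairwise fun w₁ w₂ => Disjoint (f w₁) (f w₂))
    (h3 : ∀ w₁ w₂, H.Adj w₁ w₂ → ∃ a ∈ f w₁, ∃ b ∈ f w₂, G.Adj a b) :
    G.HasMinor H :=
  ⟨f, fun w => (h1 w).1,
    fun w => (connOn_iff_induce_connected G (f w)).mp (h1 w), h2, h3⟩

/-- Contract the edge `xy` by merging `y` into `x`. -/
def contractE (G : SimpleGraph V) (x y : V) : SimpleGraph {v : V // v ≠ y} where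
  Adj a b := a ≠ b ∧
    (G.Adj a.1 b.1 ∨ (a.1 = x ∧ G.Adj y b.1) ∨ (b.1 = x ∧ G.Adj a.1 y))
  symm := by
    constructor
    rintro a b ⟨hne, h⟩
    refine ⟨hne.symm, ?_⟩
    rcases h with h | ⟨h1, h2⟩ | ⟨h1, h2⟩
    · exact Or.inl h.symm
    · exact Or.inr (Or.inr ⟨h1, h2.symm⟩)
    · exact Or.inr (Or.inl ⟨h1, h2.symm⟩)
  loopless := by constructor; rintro a ⟨hne, -⟩; exact hne rfl

lemma connOn_contractE (G : SimpleGraph V) {x y : V} (hxy : G.Adj x y)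
    (t : Set {v : V // v ≠ y}) (h : ConnOn (contractE G x y) t) :
    ConnOn G (Subtype.val '' t ∪
      {v | v = y ∧ (⟨x, hxy.ne⟩ : {v : V // v ≠ y}) ∈ t}) := by
  set X : {v : V // v ≠ y} := ⟨x, hxy.ne⟩ with hX
  set S : Set V := Subtype.val '' t ∪ {v | v = y ∧ X ∈ t} with hS
  obtain ⟨⟨a0, ha0⟩, h⟩ := h
  have hmem : ∀ p : {v : V // v ≠ y}, p ∈ t → p.1 ∈ S :=
    fun p hp => Or.inl ⟨p, hp, rfl⟩
  have hymem : X ∈ t → y ∈ S := fun hx => Or.inr ⟨rfl, hx⟩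
  have key : ∀ ⦃p q : {v : V // v ≠ y}⦄, p ∈ t → q ∈ t →
      Relation.ReflTransGen
        (fun a b => a ∈ t ∧ b ∈ t ∧ (contractE G x y).Adj a b) p q →
      Relation.ReflTransGen (fun a b => a ∈ S ∧ b ∈ S ∧ G.Adj a b) p.1 q.1 := by
    intro p q hp hq hrtg
    clear hp
    induction hrtg using Relation.ReflTransGen.head_induction_on with
    | refl => exact .refl
    | head h' _ ih =>
        obtain ⟨hp', hc', hadj⟩ := h'
        rcases hadj.2 with hd | ⟨h1, h2⟩ | ⟨h1, h2⟩
        · exact .head ⟨hmem _ hp', hmem _ hc', hd⟩ ih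
        · -- p.1 = x, G.Adj y c.1 : go p = x → y → c
          have hpX : _ ∈ t := hp'
          have hpx : (⟨_, _⟩ : {v : V // v ≠ y}) = X := Subtype.ext h1
          have hXt : X ∈ t := hpx ▸ hp'
          refine .head ⟨hmem _ hp', hymem hXt, h1 ▸ hxy⟩ (.head ⟨hymem hXt, hmem _ hc', h2⟩ ih)
        · -- c.1 = x, G.Adj p.1 y : go p → y → x = c
          have hcx : (⟨_, _⟩ : {v : V // v ≠ y}) = X := Subtype.ext h1
          have hXt : X ∈ t := hcx ▸ hc'
          refine .head ⟨hmem _ hp', hymem hXt, h2⟩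
            (.head ⟨hymem hXt, hmem _ hc', h1 ▸ hxy.symm⟩ ih)
  refine ⟨⟨a0.1, hmem _ ha0⟩, ?_⟩
  have step : ∀ ⦃a⦄, a ∈ S → ∃ p ∈ t, Relation.ReflTransGen
      (fun a b => a ∈ S ∧ b ∈ S ∧ G.Adj a b) a p.1 := by
    rintro a (⟨p, hp, rfl⟩ | ⟨rfl, hXt⟩)
    · exact ⟨p, hp, .refl⟩
    · exact ⟨X, hXt, .single ⟨hymem hXt, hmem _ hXt, hxy.symm⟩⟩
  intro a ha b hb
  obtain ⟨p, hp, hap⟩ := step ha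
  obtain ⟨q, hq, hbq⟩ := step hb
  have hsym : ∀ {u v : V}, Relation.ReflTransGen
      (fun a b => a ∈ S ∧ b ∈ S ∧ G.Adj a b) u v →
      Relation.ReflTransGen (fun a b => a ∈ S ∧ b ∈ S ∧ G.Adj a b) v u := by
    intro u v huv
    induction huv with
    | refl => exact .refl
    | tail h' hs ih => exact .head ⟨hs.2.1, hs.1, hs.2.2.symm⟩ ih
  exact (hap.trans (key hp hq (h hp hq))).trans (hsym hbq)

lemma contractE_hasMinor {W : Type*} (G : SimpleGraph V) {x y : V}
    (hxy : G.Adj x y) (H : SimpleGraph W)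
    (h : (contractE G x y).HasMinor H) : G.HasMinor H := by
  obtain ⟨f, hne, hconn, hdisj, hadj⟩ := h
  set X : {v : V // v ≠ y} := ⟨x, hxy.ne⟩ with hX
  set F : W → Set V := fun w =>
    Subtype.val '' f w ∪ {v | v = y ∧ X ∈ f w} with hF
  refine hasMinor_of_connOn G H F ?_ ?_ ?_
  · intro w
    exact connOn_contractE G hxy (f w)
      ((connOn_iff_induce_connected _ _).mpr (hconn w))
  · intro w₁ w₂ hne'
    rw [Set.disjoint_left]
    rintro a (⟨p, hp, rfl⟩ | ⟨rfl, hX1⟩) hmem2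
    · rcases hmem2 with ⟨q, hq, hqe⟩ | ⟨hay, -⟩
      · have : p = q := Subtype.ext hqe.symm
        exact (Set.disjoint_left.mp (hdisj hne') hp (this ▸ hq))
      · exact p.2 hay
    · rcases hmem2 with ⟨q, hq, hqe⟩ | ⟨-, hX2⟩
      · exact q.2 hqe
      · exact (Set.disjoint_left.mp (hdisj hne') hX1 hX2)
  · intro w₁ w₂ hadj'
    obtain ⟨a, ha, b, hb, hab⟩ := hadj w₁ w₂ hadj'
    rcases hab.2 with hd | ⟨h1, h2⟩ | ⟨h1, h2⟩
    · exact ⟨a.1, Or.inl ⟨a, ha, rfl⟩, b.1, Or.inl ⟨b, hb, rfl⟩, hd⟩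
    · have hXt : X ∈ f w₁ := (Subtype.ext h1 : a = X) ▸ ha
      exact ⟨y, Or.inr ⟨rfl, hXt⟩, b.1, Or.inl ⟨b, hb, rfl⟩, h2⟩
    · have hXt : X ∈ f w₂ := (Subtype.ext h1 : b = X) ▸ hb
      exact ⟨a.1, Or.inl ⟨a, ha, rfl⟩, y, Or.inr ⟨rfl, hXt⟩, h2⟩

lemma hasMinor_apex (G : SimpleGraph V) (x : V) {r : ℕ}
    (h : (G.induce (G.neighborSet x)).HasMinor (completeGraph (Fin r))) :
    G.HasMinor (completeGraph (Fin (r + 1))) := by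
  obtain ⟨f, hne, hconn, hdisj, hadj⟩ := h
  set F : Fin (r + 1) → Set V :=
    Fin.cons {x} (fun j => Subtype.val '' f j) with hF
  have hF0 : F 0 = {x} := rfl
  have hFs : ∀ j : Fin r, F j.succ = Subtype.val '' f j := fun j => rfl
  have hximg : ∀ j : Fin r, x ∉ F j.succ := by
    rintro j ⟨p, hp, hpe⟩
    exact G.irrefl (hpe ▸ p.2)
  refine hasMinor_of_connOn G _ F ?_ ?_ ?_
  · intro w
    refine Fin.cases ?_ ?_ w
    · exact connOn_singleton G x
    · intro j
      exact connOn_image G _ (f j)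
        ((connOn_iff_induce_connected _ _).mpr (hconn j))
  · intro w₁ w₂ hne'
    revert hne'
    refine Fin.cases ?_ ?_ w₁ <;> [skip; intro i] <;> refine Fin.cases ?_ ?_ w₂
    · intro hne'; exact absurd rfl hne'
    · intro j _
      rw [hF0, Set.disjoint_singleton_left]
      exact hximg j
    · intro hne'
      rw [hF0, Set.disjoint_singleton_right]
      exact hximg i
    · intro j hne'
      have hij : i ≠ j := fun hij => hne' (by rw [hij])
      exact Set.disjoint_image_of_injective Subtype.val_injective (hdisj hij)
  · intro w₁ w₂ hadj'
    have hne'' : w₁ ≠ w₂ := by rintro rfl; exact (completeGraph _).irrefl hadj'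
    clear hadj'
    revert hne''
    refine Fin.cases ?_ ?_ w₁ <;> [skip; intro i] <;> refine Fin.cases ?_ ?_ w₂
    · intro hne''; exact absurd rfl hne''
    · intro j _
      obtain ⟨p, hp⟩ := hne j
      exact ⟨x, rfl, p.1, ⟨p, hp, rfl⟩, p.2⟩
    · intro _
      obtain ⟨p, hp⟩ := hne i
      exact ⟨p.1, ⟨p, hp, rfl⟩, x, rfl, p.2.symm⟩
    · intro j hne''
      have hij : i ≠ j := fun hij => hne'' (by rw [hij])
      obtain ⟨a, ha, b, hb, hab⟩ := hadj i j hij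
      exact ⟨a.1, ⟨a, ha, rfl⟩, b.1, ⟨b, hb, rfl⟩, hab⟩

lemma contractE_card_edges [Fintype V] (G : SimpleGraph V) {x y : V}
    (hxy : G.Adj x y) :
    G.edgeFinset.card ≤ (contractE G x y).edgeFinset.card
      + ((G.neighborFinset x ∩ G.neighborFinset y).card + 1) := by
  classical
  set X : {v : V // v ≠ y} := ⟨x, hxy.ne⟩ with hXdef
  set ρ : V → {v : V // v ≠ y} := fun v => if h : v = y then X else ⟨v, h⟩ with hρ
  have hρval : ∀ (v : V) (h : v ≠ y), ρ v = ⟨v, h⟩ := fun v h => dif_neg h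
  set E₂ : Finset (Sym2 V) := G.edgeFinset.filter (fun e => ¬ y ∈ e) with hE₂
  set B : Finset V := G.neighborFinset y \ insert x (G.neighborFinset x) with hB
  set A : Finset (Sym2 {v : V // v ≠ y}) := E₂.image (Sym2.map ρ) with hA
  set C : Finset (Sym2 {v : V // v ≠ y}) := B.image (fun b => s(X, ρ b)) with hC
  -- mapping back
  have f1 : ∀ e ∈ E₂, Sym2.map Subtype.val (Sym2.map ρ e) = e := by
    intro e he
    rw [hE₂, mem_filter] at he
    rw [Sym2.map_map]
    have : ∀ a ∈ e, (Subtype.val ∘ ρ) a = id a := by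
      intro a ha
      have hay : a ≠ y := fun h => he.2 (h ▸ ha)
      simp [Function.comp, hρval a hay]
    rw [Sym2.map_congr this, Sym2.map_id]
    rfl
  have f2 : A ⊆ (contractE G x y).edgeFinset := by
    rw [hA, Finset.image_subset_iff]
    have key : ∀ (a b : V), s(a, b) ∈ E₂ →
        Sym2.map ρ s(a, b) ∈ (contractE G x y).edgeFinset := by
      intro a b hab
      rw [hE₂, mem_filter, mem_edgeFinset, mem_edgeSet] at hab
      obtain ⟨hadj, hy⟩ := hab
      rw [Sym2.mem_iff] at hy
      push_neg at hy
      have ha : a ≠ y := fun h => hy.1 h.symm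
      have hb : b ≠ y := fun h => hy.2 h.symm
      rw [Sym2.map_pair_eq, mem_edgeFinset, mem_edgeSet]
      refine ⟨?_, Or.inl ?_⟩
      · rw [hρval a ha, hρval b hb]
        exact fun h => hadj.ne (congrArg Subtype.val h)
      · rw [hρval a ha, hρval b hb]; exact hadj
    exact fun e he => Sym2.ind key e he
  have f3 : C ⊆ (contractE G x y).edgeFinset := by
    rw [hC, Finset.image_subset_iff]
    intro b hb
    rw [hB, mem_sdiff, mem_neighborFinset, mem_insert] at hb
    push_neg at hb
    obtain ⟨hyb, hbx, hbnx⟩ := hb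
    have hbney : b ≠ y := hyb.ne'
    rw [mem_edgeFinset, mem_edgeSet]
    refine ⟨?_, Or.inr (Or.inl ⟨rfl, ?_⟩)⟩
    · rw [hρval b hbney]
      exact fun h => hbx (congrArg Subtype.val h).symm
    · rw [hρval b hbney]; exact hyb
  have f4 : Disjoint A C := by
    rw [Finset.disjoint_left]
    rintro z hzA hzC
    rw [hA, Finset.mem_image] at hzA
    rw [hC, Finset.mem_image] at hzC
    obtain ⟨e, he, rfl⟩ := hzA
    obtain ⟨b, hb, hbe⟩ := hzC
    rw [hB, mem_sdiff, mem_neighborFinset, mem_insert] at hb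
    push_neg at hb
    obtain ⟨hyb, hbx, hbnx⟩ := hb
    have hbney : b ≠ y := hyb.ne'
    have := congrArg (Sym2.map Subtype.val) hbe
    rw [f1 e he, Sym2.map_pair_eq, hρval b hbney] at this
    have hex : e = s(x, b) := by simpa using this.symm
    rw [hE₂, mem_filter, mem_edgeFinset, hex, mem_edgeSet] at he
    rw [mem_neighborFinset] at hbnx
    exact hbnx he.1
  have f5 : A.card = E₂.card := by
    rw [hA]
    apply Finset.card_image_of_injOn
    intro e he e' he' hee
    have := congrArg (Sym2.map Subtype.val) hee
    rwa [f1 e he, f1 e' he'] at this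
  have f5c : C.card = B.card := by
    rw [hC]
    apply Finset.card_image_of_injOn
    intro b hb b' hb' hbb
    rw [Finset.mem_coe, hB, mem_sdiff, mem_insert] at hb hb'
    push_neg at hb hb'
    have hbney : b ≠ y := ((mem_neighborFinset _ _ _).mp hb.1).ne'
    have hbney' : b' ≠ y := ((mem_neighborFinset _ _ _).mp hb'.1).ne'
    have hbb2 : s(X, ρ b) = s(X, ρ b') := hbb
    rw [hρval b hbney, hρval b' hbney', Sym2.eq_iff] at hbb2
    rcases hbb2 with ⟨-, h2⟩ | ⟨h1, h2⟩
    · exact congrArg Subtype.val h2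
    · exact absurd (congrArg Subtype.val h1).symm hb'.2.1
  have f6 : B.card + ((G.neighborFinset x ∩ G.neighborFinset y).card + 1)
      = G.degree y := by
    have h1 := Finset.card_sdiff_add_card_inter (G.neighborFinset y)
      (insert x (G.neighborFinset x))
    have h2 : G.neighborFinset y ∩ insert x (G.neighborFinset x)
        = insert x (G.neighborFinset x ∩ G.neighborFinset y) := by
      ext z
      simp only [mem_inter, mem_insert, mem_neighborFinset]
      constructor
      · rintro ⟨hzy, rfl | hzx⟩
        · exact Or.inl rfl
        · exact Or.inr ⟨hzx, hzy⟩
      · rintro (rfl | ⟨hzx, hzy⟩)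
        · exact ⟨hxy.symm, Or.inl rfl⟩
        · exact ⟨hzy, Or.inr hzx⟩
    have h3 : x ∉ G.neighborFinset x ∩ G.neighborFinset y := by
      simp [mem_inter, mem_neighborFinset]
    rw [h2, Finset.card_insert_of_notMem h3] at h1
    rw [← G.card_neighborFinset_eq_degree y, ← h1, hB]
  have f7 : E₂.card + G.degree y = G.edgeFinset.card := by
    have h1 := Finset.card_filter_add_card_filter_not
      (s := G.edgeFinset) (p := fun e => y ∈ e)
    have h2 : (G.edgeFinset.filter (fun e => y ∈ e)).card = G.degree y := by
      rw [← incidenceFinset_eq_filter, card_incidenceFinset_eq_degree]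
    rw [hE₂]
    omega
  have hsub : A ∪ C ⊆ (contractE G x y).edgeFinset := Finset.union_subset f2 f3
  have hcard := Finset.card_le_card hsub
  rw [Finset.card_union_of_disjoint f4, f5, f5c] at hcard
  omega

lemma hasMinor_K1 (G : SimpleGraph V) (v : V) :
    G.HasMinor (completeGraph (Fin 1)) := by
  refine hasMinor_of_connOn G _ (fun _ => {v})
    (fun _ => connOn_singleton G v) ?_ ?_
  · intro i j hij
    exact absurd (Subsingleton.elim i j) hij
  · intro i j hij
    cases Subsingleton.elim i j
    exact absurd hij ((completeGraph (Fin 1)).irrefl)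

lemma mader : ∀ (r n : ℕ) (V : Type u) [Fintype V] (G : SimpleGraph V),
    Fintype.card V = n → 1 ≤ n → 2 ^ r * n ≤ G.edgeFinset.card →
    G.HasMinor (completeGraph (Fin (r + 2))) := by
  intro r
  induction r with
  | zero =>
    intro n V _ G hcard hn he
    have hpos : 0 < G.edgeFinset.card := by
      have h0 : 0 < 2 ^ 0 * n := by simp only [pow_zero, one_mul]; omega
      omega
    obtain ⟨e, he'⟩ := Finset.card_pos.mp hpos
    have hedge : ∃ x y, G.Adj x y := by
      revert he'
      refine Sym2.ind ?_ e
      intro a b hab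
      rw [mem_edgeFinset, mem_edgeSet] at hab
      exact ⟨a, b, hab⟩
    obtain ⟨a, b, hab⟩ := hedge
    exact hasMinor_apex G a (hasMinor_K1 _ ⟨b, hab⟩)
  | succ r ih =>
    intro n
    induction n using Nat.strong_induction_on with
    | _ n ihn =>
      intro V _ G hcard hn he
      have h2r : 0 < 2 ^ (r + 1) := Nat.pow_pos (by norm_num)
      have hpos : 0 < G.edgeFinset.card := by
        have : 0 < 2 ^ (r + 1) * n := Nat.mul_pos h2r hn
        omega
      obtain ⟨e, he'⟩ := Finset.card_pos.mp hpos
      have hedge : ∃ x y, G.Adj x y := by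
        revert he'
        refine Sym2.ind ?_ e
        intro a b hab
        rw [mem_edgeFinset, mem_edgeSet] at hab
        exact ⟨a, b, hab⟩
      obtain ⟨x, y, hxy⟩ := hedge
      by_cases hA : ∃ u v, G.Adj u v ∧
          (G.neighborFinset u ∩ G.neighborFinset v).card + 1 ≤ 2 ^ (r + 1)
      · -- contract an edge with few common neighbours
        obtain ⟨u, v, huv, ht⟩ := hA
        have hcard' : Fintype.card {w : V // w ≠ v} = n - 1 := by
          have h1 := Fintype.card_subtype_compl (fun w : V => w = v)
          rw [Fintype.card_subtype_eq, hcard] at h1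
          exact h1
        have hn2 : 2 ≤ n := by
          have h1 : (1 : ℕ) < Fintype.card V :=
            Fintype.one_lt_card_iff_nontrivial.mpr ⟨⟨u, v, huv.ne⟩⟩
          omega
        have hecontr := contractE_card_edges G huv
        have he' : 2 ^ (r + 1) * (n - 1) ≤ (contractE G u v).edgeFinset.card := by
          have hmul : 2 ^ (r + 1) * n = 2 ^ (r + 1) * (n - 1) + 2 ^ (r + 1) := by
            cases n with
            | zero => omega
            | succ m => simp [Nat.succ_sub_one, Nat.mul_succ]
          linarith
        have hminor := ihn (n - 1) (by omega) _ (contractE G u v) hcard'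
          (by omega) he'
        exact contractE_hasMinor G huv _ hminor
      · -- every edge has many common neighbours
        push_neg at hA
        have hA' : ∀ u v, G.Adj u v →
            2 ^ (r + 1) ≤ (G.neighborFinset u ∩ G.neighborFinset v).card := by
          intro u v huv
          have := hA u v huv
          omega
        set s := G.neighborSet x with hs
        have hdegpos : 0 < G.degree x := (G.degree_pos_iff_exists_adj x).mpr ⟨y, hxy⟩
        have hmindeg : ∀ b : ↥s, 2 ^ (r + 1) ≤ (G.induce s).degree b := by
          intro b
          have hadjb : G.Adj x b.1 := b.2
          have hcommon := hA' x b.1 hadjb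
          have hinj : (G.neighborFinset x ∩ G.neighborFinset b.1).card ≤
              (G.induce s).degree b := by
            rw [← card_neighborFinset_eq_degree]
            apply Finset.card_le_card_of_injOn
              (fun z => if hz : G.Adj x z then (⟨z, hz⟩ : ↥s) else b)
            · intro z hz
              rw [Finset.mem_coe, mem_inter, mem_neighborFinset, mem_neighborFinset] at hz
              simp only [Finset.mem_coe]
              rw [dif_pos hz.1, mem_neighborFinset]
              exact hz.2
            · intro z hz z' hz' hzz
              rw [Finset.mem_coe, mem_inter, mem_neighborFinset] at hz hz'
              have hzz2 : (if h2 : G.Adj x z then (⟨z, h2⟩ : ↥s) else b)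
                  = (if h2 : G.Adj x z' then (⟨z', h2⟩ : ↥s) else b) := hzz
              rw [dif_pos hz.1, dif_pos hz'.1] at hzz2
              exact congrArg Subtype.val hzz2
          omega
        have hedge2 : 2 ^ r * G.degree x ≤ (G.induce s).edgeFinset.card := by
          have hsum := (G.induce s).sum_degrees_eq_twice_card_edges
          have hlow := Finset.card_nsmul_le_sum Finset.univ
            (fun b => (G.induce s).degree b) (2 ^ (r + 1))
            (fun b _ => hmindeg b)
          rw [smul_eq_mul, Finset.card_univ] at hlow
          have hcards : Fintype.card ↥s = G.degree x :=
            G.card_neighborSet_eq_degree x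
          have h2 : 2 * (2 ^ r * G.degree x) ≤
              2 * (G.induce s).edgeFinset.card := by
            have he3 : G.degree x * 2 ^ (r + 1) ≤
                2 * (G.induce s).edgeFinset.card := by
              rw [← hsum, ← hcards]
              exact hlow
            calc 2 * (2 ^ r * G.degree x) = G.degree x * 2 ^ (r + 1) := by ring
              _ ≤ _ := he3
          exact Nat.le_of_mul_le_mul_left h2 (by norm_num)
        have hminor := ih (G.degree x) ↥s (G.induce s)
          (G.card_neighborSet_eq_degree x) hdegpos hedge2
        exact hasMinor_apex G x hminor

lemma heq_graph_iso {a b : ℕ} (h : a = b) {H1 : SimpleGraph (Fin a)}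
    {H2 : SimpleGraph (Fin b)} (hh : HEq H1 H2) : Nonempty (H1 ≃g H2) := by
  subst h
  cases eq_of_heq hh
  exact ⟨RelIso.refl H1.Adj⟩

def comapIso {α β : Type*} (e : α ≃ β) (H : SimpleGraph β) :
    H.comap ⇑e ≃g H :=
  { toEquiv := e, map_rel_iff' := Iff.rfl }

/-- All but finitely many link-irregular graphs are non-planar: there is a bound
`N` such that every planar link-irregular graph has at most `N` vertices (and
hence there are only finitely many isomorphism classes of such graphs). -/
theorem finitely_many_planar_linkIrregular :
    ∃ N : ℕ, ∀ (n : ℕ) (G : SimpleGraph (Fin n)),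
      G.Planar → G.LinkIrregular → n ≤ N := by
  classical
  refine ⟨2 * Fintype.card (Σ k : Fin 32, SimpleGraph (Fin k.1)), ?_⟩
  intro n G hplanar hirr
  by_contra hcon
  push_neg at hcon
  set M := Fintype.card (Σ k : Fin 32, SimpleGraph (Fin k.1)) with hM
  have hn1 : 1 ≤ n := by omega
  have hK5 := hplanar.1
  have hedge : G.edgeFinset.card < 8 * n := by
    by_contra h
    push_neg at h
    refine hK5 (mader 3 n (Fin n) G (by simp) hn1 ?_)
    calc (2 : ℕ) ^ 3 * n = 8 * n := by norm_num
      _ ≤ _ := h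
  have hsum := G.sum_degrees_eq_twice_card_edges
  set Hs : Finset (Fin n) := univ.filter (fun v => 32 ≤ G.degree v) with hHs
  set L : Finset (Fin n) := univ.filter (fun v => ¬ 32 ≤ G.degree v) with hL
  have hHL : Hs.card + L.card = n := by
    rw [hHs, hL, Finset.card_filter_add_card_filter_not, card_univ,
      Fintype.card_fin]
  have hHbound : 32 * Hs.card ≤ 2 * G.edgeFinset.card := by
    have h1 := Finset.card_nsmul_le_sum Hs (fun v => G.degree v) 32
      (fun v hv => (mem_filter.mp hv).2)
    have h2 : ∑ v ∈ Hs, G.degree v ≤ ∑ v, G.degree v :=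
      Finset.sum_le_sum_of_subset (Finset.filter_subset _ _)
    rw [smul_eq_mul, mul_comm] at h1
    omega
  -- the coding map for low-degree vertices
  set code : Fin n → Σ k : Fin 32, SimpleGraph (Fin k.1) := fun v =>
    if h : G.degree v < 32 then
      ⟨⟨G.degree v, h⟩, SimpleGraph.comap
        (⇑(Fintype.equivFinOfCardEq (G.card_neighborSet_eq_degree v)).symm)
        (G.link v)⟩
    else ⟨⟨0, by norm_num⟩, ⊥⟩ with hcode
  have hinj : Set.InjOn code ↑L := by
    intro u hu v hv huv
    by_contra hne
    rw [Finset.mem_coe, hL, mem_filter] at hu hv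
    have hu32 : G.degree u < 32 := by omega
    have hv32 : G.degree v < 32 := by omega
    rw [hcode] at huv
    simp only at huv
    rw [dif_pos hu32, dif_pos hv32] at huv
    obtain ⟨h1, h2⟩ := Sigma.mk.inj_iff.mp huv
    have hd : G.degree u = G.degree v := congrArg Fin.val h1
    obtain ⟨iso0⟩ := heq_graph_iso hd h2
    exact hirr u v hne
      ⟨((comapIso _ (G.link u)).symm.trans iso0).trans (comapIso _ (G.link v))⟩
  have hLM : L.card ≤ M := by
    have h1 := Finset.card_le_card_of_injOn code (fun a _ => mem_univ (code a)) hinj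
    rwa [card_univ] at h1
  omega
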